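/- The triple α-contraction of the Möbius function is a fixed point of α-contraction: for all n ≥ 1, ∑_{d : α(d) = n} μ_{α³}(d) = μ_{α³}(n). -/
import Mathlib


open Finset

noncomputable def fibAlpha (n : ℕ) : ℕ := sInf {m | 0 < m ∧ n ∣ Nat.fib m}

noncomputable def alphaCon (f : ℕ → ℤ) (n : ℕ) : ℤ :=
  ∑ m ∈ (Icc 1 (Nat.fib n)).filter (fun m => fibAlpha m = n), f m

-- every positive n divides some positive fib
lemma exists_fib_dvd (n : ℕ) (hn : 0 < n) : ∃ k, 0 < k ∧ n ∣ Nat.fib k := by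
  haveI : NeZero n := ⟨hn.ne'⟩
  obtain ⟨i, j, hne, hij⟩ := Finite.exists_ne_map_eq_of_infinite
    (fun k : ℕ => ((Nat.fib k : ZMod n), (Nat.fib (k+1) : ZMod n)))
  wlog h : i < j generalizing i j
  · exact this j i hne.symm hij.symm (by omega)
  -- backward induction
  have key : ∀ s, s ≤ i → ((Nat.fib (i - s) : ZMod n), (Nat.fib (i - s + 1) : ZMod n))
      = ((Nat.fib (j - s) : ZMod n), (Nat.fib (j - s + 1) : ZMod n)) := by
    intro s
    induction s with
    | zero => intro _; simpa using hij
    | succ s ih =>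
      intro hs
      have h1 := ih (by omega)
      obtain ⟨a, ha⟩ : ∃ a, i - s = a + 1 := ⟨i - s - 1, by omega⟩
      obtain ⟨b, hb⟩ : ∃ b, j - s = b + 1 := ⟨j - s - 1, by omega⟩
      have ha' : i - (s+1) = a := by omega
      have hb' : j - (s+1) = b := by omega
      rw [ha, hb] at h1
      have e1 : (Nat.fib (a+1) : ZMod n) = (Nat.fib (b+1) : ZMod n) := congrArg Prod.fst h1
      have e2 : (Nat.fib (a+2) : ZMod n) = (Nat.fib (b+2) : ZMod n) := congrArg Prod.snd h1
      rw [Nat.fib_add_two, Nat.fib_add_two] at e2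
      push_cast at e2
      rw [ha', hb']
      have : (Nat.fib a : ZMod n) = (Nat.fib b : ZMod n) := by
        have := e2; rw [e1] at this; linear_combination this
      exact Prod.ext this e1
  have := key i le_rfl
  simp at this
  refine ⟨j - i, by omega, ?_⟩
  have : (Nat.fib (j - i) : ZMod n) = 0 := this.1.symm
  exact (ZMod.natCast_eq_zero_iff _ _).mp this

lemma fibAlpha_spec (n : ℕ) (hn : 0 < n) :
    0 < fibAlpha n ∧ n ∣ Nat.fib (fibAlpha n) := by
  have : fibAlpha n ∈ {m | 0 < m ∧ n ∣ Nat.fib m} :=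
    Nat.sInf_mem (exists_fib_dvd n hn)
  exact this

lemma fibAlpha_le {n k : ℕ} (hk : 0 < k) (h : n ∣ Nat.fib k) : fibAlpha n ≤ k :=
  Nat.sInf_le ⟨hk, h⟩

lemma fibAlpha_dvd_iff (n : ℕ) (hn : 0 < n) (k : ℕ) :
    fibAlpha n ∣ k ↔ n ∣ Nat.fib k := by
  constructor
  · intro h
    exact dvd_trans (fibAlpha_spec n hn).2 (Nat.fib_dvd _ _ h)
  · intro h
    rcases Nat.eq_zero_or_pos k with rfl | hk
    · exact dvd_zero _
    have hg : n ∣ Nat.fib (Nat.gcd (fibAlpha n) k) := by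
      rw [Nat.fib_gcd]
      exact Nat.dvd_gcd (fibAlpha_spec n hn).2 h
    have hgpos : 0 < Nat.gcd (fibAlpha n) k :=
      Nat.gcd_pos_of_pos_right _ hk
    have h1 : fibAlpha n ≤ Nat.gcd (fibAlpha n) k := fibAlpha_le hgpos hg
    have h2 : Nat.gcd (fibAlpha n) k ≤ fibAlpha n :=
      Nat.le_of_dvd (fibAlpha_spec n hn).1 (Nat.gcd_dvd_left _ _)
    have : Nat.gcd (fibAlpha n) k = fibAlpha n := le_antisymm h2 h1
    rw [← this]; exact Nat.gcd_dvd_right _ _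

lemma fibAlpha_zero : fibAlpha 0 = 0 := by
  have : {m | 0 < m ∧ (0:ℕ) ∣ Nat.fib m} = ∅ := by
    ext m; simp only [Set.mem_setOf_eq, Set.mem_empty_iff_false, iff_false]
    rintro ⟨hm, hd⟩
    have : Nat.fib m = 0 := Nat.eq_zero_of_zero_dvd hd
    rw [Nat.fib_eq_zero] at this
    omega
  rw [fibAlpha, this, Nat.sInf_empty]

lemma sum_divisors_alphaCon (f : ℕ → ℤ) (n : ℕ) (hn : 0 < n) :
    ∑ d ∈ n.divisors, alphaCon f d = ∑ m ∈ (Nat.fib n).divisors, f m := by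
  have hfn : 0 < Nat.fib n := Nat.fib_pos.mpr hn
  rw [← Finset.sum_fiberwise_of_maps_to (g := fibAlpha) (t := n.divisors) ?_ f]
  · apply Finset.sum_congr rfl
    intro d hd
    rw [Nat.mem_divisors] at hd
    have hdpos : 0 < d := Nat.pos_of_dvd_of_pos hd.1 hn
    apply Finset.sum_congr _ (fun _ _ => rfl)
    ext m
    simp only [mem_filter, Nat.mem_divisors, mem_Icc]
    constructor
    · rintro ⟨⟨hm1, _⟩, hfa⟩
      have hmd : m ∣ Nat.fib d := by
        rw [← hfa]; exact (fibAlpha_spec m hm1).2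
      exact ⟨⟨hmd.trans (Nat.fib_dvd _ _ hd.1), hfn.ne'⟩, hfa⟩
    · rintro ⟨⟨_, _⟩, hfa⟩
      have hm : 0 < m := by
        rcases Nat.eq_zero_or_pos m with rfl | h
        · rw [fibAlpha_zero] at hfa; omega
        · exact h
      have hmd : m ∣ Nat.fib d := by
        rw [← hfa]; exact (fibAlpha_spec m hm).2
      exact ⟨⟨hm, Nat.le_of_dvd (Nat.fib_pos.mpr hdpos) hmd⟩, hfa⟩
  · intro m hm
    rw [Nat.mem_divisors] at hm
    have hmpos : 0 < m := Nat.pos_of_dvd_of_pos hm.1 hfn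
    rw [Nat.mem_divisors]
    refine ⟨?_, hn.ne'⟩
    rw [fibAlpha_dvd_iff m hmpos]
    exact hm.1

lemma divisor_sum_ext (g h : ℕ → ℤ)
    (H : ∀ n, 0 < n → ∑ d ∈ n.divisors, g d = ∑ d ∈ n.divisors, h d) :
    ∀ n, 0 < n → g n = h n := by
  intro n
  induction n using Nat.strong_induction_on with
  | _ n ih =>
    intro hn
    have := H n hn
    rw [← Nat.cons_self_properDivisors hn.ne', Finset.sum_cons, Finset.sum_cons] at this
    have hp : ∑ d ∈ n.properDivisors, g d = ∑ d ∈ n.properDivisors, h d := by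
      apply Finset.sum_congr rfl
      intro d hd
      rw [Nat.mem_properDivisors] at hd
      exact ih d hd.2 (Nat.pos_of_dvd_of_pos hd.1 hn)
    omega

lemma fib_le_iff (c b : ℕ) (hb : Nat.fib b ≤ c) (hb2 : c < Nat.fib (b+1)) (N : ℕ) :
    Nat.fib N ≤ c ↔ N ≤ b := by
  constructor
  · intro h
    by_contra hc
    have : Nat.fib (b+1) ≤ Nat.fib N := Nat.fib_mono (by omega)
    omega
  · intro h
    exact le_trans (Nat.fib_mono h) hb

lemma sum_moebius (N : ℕ) :
    ∑ d ∈ N.divisors, (ArithmeticFunction.moebius d : ℤ) = if N = 1 then 1 else 0 := by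
  have := ArithmeticFunction.moebius_mul_coe_zeta
  have h2 := congrArg (fun f => f N) this
  simp only [ArithmeticFunction.coe_mul_zeta_apply, ArithmeticFunction.one_apply] at h2
  exact h2

lemma fib_facts : Nat.fib 2 = 1 ∧ Nat.fib 3 = 2 ∧ Nat.fib 4 = 3 ∧ Nat.fib 5 = 5 := by decide

lemma S1 (N : ℕ) (hN : 0 < N) :
    ∑ d ∈ N.divisors, alphaCon (fun m => ArithmeticFunction.moebius m) d
      = if N ≤ 2 then 1 else 0 := by
  rw [sum_divisors_alphaCon _ _ hN, sum_moebius]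
  have hpos : 0 < Nat.fib N := Nat.fib_pos.mpr hN
  have : Nat.fib N = 1 ↔ N ≤ 2 := by
    rw [show (Nat.fib N = 1) ↔ (Nat.fib N ≤ 1) by omega]
    exact fib_le_iff 1 2 (by decide) (by decide) N
  simp [this]

lemma S2 (N : ℕ) (hN : 0 < N) :
    ∑ d ∈ N.divisors, alphaCon (alphaCon (fun m => ArithmeticFunction.moebius m)) d
      = if N ≤ 3 then 1 else 0 := by
  rw [sum_divisors_alphaCon _ _ hN, S1 _ (Nat.fib_pos.mpr hN)]
  simp [fib_le_iff 2 3 (by decide) (by decide) N]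

lemma S3 (N : ℕ) (hN : 0 < N) :
    ∑ d ∈ N.divisors, alphaCon (alphaCon (alphaCon (fun m => ArithmeticFunction.moebius m))) d
      = if N ≤ 4 then 1 else 0 := by
  rw [sum_divisors_alphaCon _ _ hN, S2 _ (Nat.fib_pos.mpr hN)]
  simp [fib_le_iff 3 4 (by decide) (by decide) N]

lemma S4 (N : ℕ) (hN : 0 < N) :
    ∑ d ∈ N.divisors,
      alphaCon (alphaCon (alphaCon (alphaCon (fun m => ArithmeticFunction.moebius m)))) d
      = if N ≤ 4 then 1 else 0 := by
  rw [sum_divisors_alphaCon _ _ hN, S3 _ (Nat.fib_pos.mpr hN)]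
  simp [fib_le_iff 4 4 (by decide) (by decide) N]

/-- `μ_{α³}` is a fixed point of α-contraction. -/
theorem moebius_alphaCon_cubed_fixed (n : ℕ) (hn : 0 < n) :
    alphaCon (alphaCon (alphaCon (alphaCon (fun m => ArithmeticFunction.moebius m)))) n
      = alphaCon (alphaCon (alphaCon (fun m => ArithmeticFunction.moebius m))) n := by
  exact divisor_sum_ext _ _ (fun N hN => (S4 N hN).trans (S3 N hN).symm) n hn
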